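/- In the free bialgebra B = k⟨g,x⟩ (with Δ(g)=g⊗g, Δ(x)=x⊗1+g⊗x), the comultiplication of the homogeneous sums C_{p,q} satisfies Δ(C_{p,q}) = Σ_{k≥0} C_{p+k,q-k} ⊗ C_{p,k}. -/

import Mathlib

open FreeAlgebra

variable (kk : Type) [Field kk]

/-- The free algebra `B = k⟨g,x⟩` on two generators. -/
abbrev FreeBi (kk : Type) [Field kk] := FreeAlgebra kk (Fin 2)

/-- The generator `g`. -/
noncomputable def gB : FreeBi kk := FreeAlgebra.ι kk 0

/-- The generator `x`. -/
noncomputable def xB : FreeBi kk := FreeAlgebra.ι kk 1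

/-- The monomial (word) associated to a function `f : Fin n → Fin 2`. -/
noncomputable def wordB {n : ℕ} (f : Fin n → Fin 2) : FreeBi kk :=
  (List.ofFn fun i => FreeAlgebra.ι kk (f i)).prod

/-- `CB a b` is the sum of all monomials with `a` occurrences of `g` and `b`
occurrences of `x`. -/
noncomputable def CB (a b : ℕ) : FreeBi kk :=
  ∑ f ∈ Finset.univ.filter
      (fun f : Fin (a + b) → Fin 2 => (Finset.univ.filter (fun i => f i = 0)).card = a),
    wordB kk f

open TensorProduct in
/-- The comultiplication of the free bialgebra, determined by
`Δ(g) = g ⊗ g` and `Δ(x) = x ⊗ 1 + g ⊗ x`. -/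
noncomputable def DeltaB : FreeBi kk →ₐ[kk] FreeBi kk ⊗[kk] FreeBi kk :=
  FreeAlgebra.lift kk
    (fun i => if i = 0 then gB kk ⊗ₜ[kk] gB kk else xB kk ⊗ₜ[kk] 1 + gB kk ⊗ₜ[kk] xB kk)

noncomputable def CB' (n a : ℕ) : FreeBi kk :=
  ∑ f ∈ Finset.univ.filter
      (fun f : Fin n → Fin 2 => (Finset.univ.filter (fun i => f i = 0)).card = a),
    wordB kk f

lemma CB'_eq_zero {n a : ℕ} (h : n < a) : CB' kk n a = 0 := by
  unfold CB'
  rw [Finset.filter_false_of_mem, Finset.sum_empty]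
  intro f _ hc
  have h1 : (Finset.univ.filter fun i => f i = 0).card ≤ n := by
    simpa using Finset.card_filter_le Finset.univ fun i => f i = 0
  omega

lemma CB'_zero : CB' kk 0 0 = 1 := by
  unfold CB' wordB
  simp

lemma wordB_cons {n : ℕ} (y : Fin 2) (f : Fin n → Fin 2) :
    wordB kk (Fin.cons y f : Fin (n+1) → Fin 2) = FreeAlgebra.ι kk y * wordB kk f := by
  unfold wordB
  rw [List.ofFn_succ, List.prod_cons]
  simp [Fin.cons_succ]

lemma count_cons {n : ℕ} (y : Fin 2) (f : Fin n → Fin 2) :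
    (Finset.univ.filter (fun i => (Fin.cons y f : Fin (n+1) → Fin 2) i = 0)).card
      = (if y = 0 then 1 else 0) + (Finset.univ.filter (fun i => f i = 0)).card := by
  rw [Finset.card_filter, Finset.card_filter, Fin.sum_univ_succ]
  simp [Fin.cons_succ]

lemma CB'_succ (n a : ℕ) :
    CB' kk (n+1) a =
      ∑ y : Fin 2, ∑ f ∈ Finset.univ.filter
        (fun f : Fin n → Fin 2 =>
          (if y = 0 then 1 else 0) + (Finset.univ.filter (fun i => f i = 0)).card = a),
        FreeAlgebra.ι kk y * wordB kk f := by
  unfold CB'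
  rw [Finset.sum_filter]
  rw [← (Fin.consEquiv (fun _ : Fin (n+1) => Fin 2)).sum_comp]
  rw [Fintype.sum_prod_type]
  simp only [Fin.consEquiv_apply, count_cons, Finset.sum_filter]
  simp only [Fin.consEquiv, Equiv.coe_fn_mk, wordB_cons]

lemma CB'_succ_zero (n : ℕ) : CB' kk (n+1) 0 = xB kk * CB' kk n 0 := by
  rw [CB'_succ, Fin.sum_univ_two]
  simp only [if_pos rfl, if_neg (by decide : ¬(1:Fin 2) = 0)]
  rw [CB', Finset.mul_sum]
  simp [Nat.add_eq_zero, xB]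

lemma CB'_succ_succ (n a : ℕ) :
    CB' kk (n+1) (a+1) = gB kk * CB' kk n a + xB kk * CB' kk n (a+1) := by
  rw [CB'_succ, Fin.sum_univ_two]
  simp only [if_pos rfl, if_neg (by decide : ¬(1:Fin 2) = 0)]
  rw [CB', CB', Finset.mul_sum, Finset.mul_sum]
  congr 1
  · apply Finset.sum_congr
    · congr 1; ext f; simp [Nat.add_comm 1]
    · intros; rfl
  · apply Finset.sum_congr
    · congr 1; ext f; simp
    · intros; rfl

open TensorProduct in
lemma DeltaB_gB : DeltaB kk (gB kk) = gB kk ⊗ₜ[kk] gB kk := by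
  rw [DeltaB, gB, FreeAlgebra.lift_ι_apply]; simp

open TensorProduct in
lemma DeltaB_xB : DeltaB kk (xB kk) = xB kk ⊗ₜ[kk] 1 + gB kk ⊗ₜ[kk] xB kk := by
  rw [DeltaB, xB, FreeAlgebra.lift_ι_apply]; simp

open TensorProduct in
lemma key (n a : ℕ) :
    DeltaB kk (CB' kk n a) =
      ∑ k ∈ Finset.range (n+1), CB' kk n (a+k) ⊗ₜ[kk] CB' kk (a+k) a := by
  induction n generalizing a with
  | zero =>
    cases a with
    | zero =>
      rw [CB'_zero, map_one, Finset.sum_range_one, CB'_zero]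
      rw [Algebra.TensorProduct.one_def]
    | succ a =>
      rw [CB'_eq_zero kk (by omega), map_zero]
      symm
      apply Finset.sum_eq_zero
      intro k _
      rw [CB'_eq_zero kk (by omega), TensorProduct.zero_tmul]
  | succ n ih =>
    cases a with
    | zero =>
      rw [CB'_succ_zero, map_mul, DeltaB_xB, ih, add_mul, Finset.mul_sum, Finset.mul_sum]
      simp only [Algebra.TensorProduct.tmul_mul_tmul, one_mul, Nat.zero_add]
      -- LHS = Σ_{k∈range(n+1)} (x CB' n k) ⊗ CB' k 0 + Σ_{k∈range(n+1)} (g CB' n k) ⊗ (x CB' k 0)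
      have L1 : (∑ k ∈ Finset.range (n+1), (xB kk * CB' kk n k) ⊗ₜ[kk] CB' kk k 0)
          = (∑ k ∈ Finset.range n, (xB kk * CB' kk n (k+1)) ⊗ₜ[kk] (xB kk * CB' kk k 0))
            + (xB kk * CB' kk n 0) ⊗ₜ[kk] 1 := by
        rw [Finset.sum_range_succ']
        simp only [CB'_succ_zero, CB'_zero]
      have R1 : (∑ k ∈ Finset.range (n+1+1), CB' kk (n+1) k ⊗ₜ[kk] CB' kk k 0)
          = (∑ k ∈ Finset.range (n+1), (gB kk * CB' kk n k) ⊗ₜ[kk] (xB kk * CB' kk k 0))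
            + (∑ k ∈ Finset.range n, (xB kk * CB' kk n (k+1)) ⊗ₜ[kk] (xB kk * CB' kk k 0))
            + (xB kk * CB' kk n 0) ⊗ₜ[kk] 1 := by
        rw [Finset.sum_range_succ']
        simp only [CB'_succ_succ, CB'_succ_zero, CB'_zero, TensorProduct.add_tmul,
          Finset.sum_add_distrib]
        rw [Finset.sum_range_succ (fun k => (xB kk * CB' kk n (k+1)) ⊗ₜ[kk] (xB kk * CB' kk k 0)) n]
        rw [CB'_eq_zero kk (by omega), mul_zero, TensorProduct.zero_tmul, add_zero]
      rw [L1, R1]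
      abel
    | succ a =>
      rw [CB'_succ_succ, map_add, map_mul, map_mul, DeltaB_gB, DeltaB_xB, ih, ih,
        add_mul, Finset.mul_sum, Finset.mul_sum, Finset.mul_sum]
      simp only [Algebra.TensorProduct.tmul_mul_tmul, one_mul]
      -- RHS rewrite
      have R1 : (∑ k ∈ Finset.range (n+1+1), CB' kk (n+1) (a+1+k) ⊗ₜ[kk] CB' kk (a+1+k) (a+1))
          = (∑ k ∈ Finset.range (n+1), (gB kk * CB' kk n (a+k)) ⊗ₜ[kk] (gB kk * CB' kk (a+k) a))
            + (∑ k ∈ Finset.range (n+1), (gB kk * CB' kk n (a+1+k)) ⊗ₜ[kk] (xB kk * CB' kk (a+1+k) (a+1)))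
            + (∑ k ∈ Finset.range (n+1), (xB kk * CB' kk n (a+1+k)) ⊗ₜ[kk] CB' kk (a+1+k) (a+1)) := by
        calc (∑ k ∈ Finset.range (n+1+1), CB' kk (n+1) (a+1+k) ⊗ₜ[kk] CB' kk (a+1+k) (a+1))
            = ∑ k ∈ Finset.range (n+1+1),
                ((gB kk * CB' kk n (a+k) + xB kk * CB' kk n (a+k+1)) ⊗ₜ[kk] CB' kk (a+k+1) (a+1)) := by
              refine Finset.sum_congr rfl fun k _ => ?_
              have h : a+1+k = a+k+1 := by omega
              rw [h, CB'_succ_succ]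
          _ = (∑ k ∈ Finset.range (n+1+1), (gB kk * CB' kk n (a+k)) ⊗ₜ[kk] CB' kk (a+k+1) (a+1))
              + (∑ k ∈ Finset.range (n+1+1), (xB kk * CB' kk n (a+k+1)) ⊗ₜ[kk] CB' kk (a+k+1) (a+1)) := by
              simp only [TensorProduct.add_tmul, Finset.sum_add_distrib]
          _ = (∑ k ∈ Finset.range (n+1+1), (gB kk * CB' kk n (a+k)) ⊗ₜ[kk]
                  (gB kk * CB' kk (a+k) a + xB kk * CB' kk (a+k) (a+1)))
              + (∑ k ∈ Finset.range (n+1), (xB kk * CB' kk n (a+1+k)) ⊗ₜ[kk] CB' kk (a+1+k) (a+1)) := by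
              congr 1
              · refine Finset.sum_congr rfl fun k _ => ?_
                rw [CB'_succ_succ]
              · rw [Finset.sum_range_succ,
                  show CB' kk n (a+(n+1)+1) = 0 from CB'_eq_zero kk (by omega),
                  mul_zero, TensorProduct.zero_tmul, add_zero]
                refine Finset.sum_congr rfl fun k _ => ?_
                have h : a+k+1 = a+1+k := by omega
                rw [h]
          _ = (∑ k ∈ Finset.range (n+1+1), (gB kk * CB' kk n (a+k)) ⊗ₜ[kk] (gB kk * CB' kk (a+k) a))
              + (∑ k ∈ Finset.range (n+1+1), (gB kk * CB' kk n (a+k)) ⊗ₜ[kk] (xB kk * CB' kk (a+k) (a+1)))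
              + (∑ k ∈ Finset.range (n+1), (xB kk * CB' kk n (a+1+k)) ⊗ₜ[kk] CB' kk (a+1+k) (a+1)) := by
              rw [← Finset.sum_add_distrib]
              congr 1
              refine Finset.sum_congr rfl fun k _ => ?_
              rw [TensorProduct.tmul_add]
          _ = (∑ k ∈ Finset.range (n+1), (gB kk * CB' kk n (a+k)) ⊗ₜ[kk] (gB kk * CB' kk (a+k) a))
              + (∑ k ∈ Finset.range (n+1), (gB kk * CB' kk n (a+1+k)) ⊗ₜ[kk] (xB kk * CB' kk (a+1+k) (a+1)))
              + (∑ k ∈ Finset.range (n+1), (xB kk * CB' kk n (a+1+k)) ⊗ₜ[kk] CB' kk (a+1+k) (a+1)) := by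
              congr 1
              congr 1
              · rw [Finset.sum_range_succ,
                  show CB' kk n (a+(n+1)) = 0 from CB'_eq_zero kk (by omega),
                  mul_zero, TensorProduct.zero_tmul, add_zero]
              · rw [Finset.sum_range_succ', show a + 0 = a by omega,
                  show CB' kk a (a+1) = 0 from CB'_eq_zero kk (by omega),
                  mul_zero, TensorProduct.tmul_zero, add_zero]
                refine Finset.sum_congr rfl fun k _ => ?_
                have h : a+(k+1) = a+1+k := by omega
                rw [h]
      rw [R1]
      abel

open TensorProduct in
/-- `Δ(C_{p,q}) = Σ_{k≥0} C_{p+k,q-k} ⊗ C_{p,k}` (the terms with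
`k > q` vanish since `C_{p+k,q-k} = 0` for negative second index). -/
theorem DeltaB_CB (p q : ℕ) :
    DeltaB kk (CB kk p q) =
      ∑ k ∈ Finset.range (q + 1), CB kk (p + k) (q - k) ⊗ₜ[kk] CB kk p k := by
  calc DeltaB kk (CB kk p q)
      = ∑ k ∈ Finset.range (p+q+1), CB' kk (p+q) (p+k) ⊗ₜ[kk] CB' kk (p+k) p := by
        rw [show CB kk p q = CB' kk (p+q) p from rfl, key]
    _ = ∑ k ∈ Finset.range (q+1), CB' kk (p+q) (p+k) ⊗ₜ[kk] CB' kk (p+k) p := by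
        symm
        apply Finset.sum_subset
        · intro k hk
          simp only [Finset.mem_range] at *
          omega
        · intro k _ hk
          simp only [Finset.mem_range] at hk
          rw [CB'_eq_zero kk (by omega), TensorProduct.zero_tmul]
    _ = ∑ k ∈ Finset.range (q+1), CB kk (p+k) (q-k) ⊗ₜ[kk] CB kk p k := by
        refine Finset.sum_congr rfl fun k hk => ?_
        simp only [Finset.mem_range] at hk
        have h1 : CB kk (p+k) (q-k) = CB' kk ((p+k)+(q-k)) (p+k) := rfl
        have h2 : (p+k)+(q-k) = p+q := by omega
        rw [h1, h2]
        rfl
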